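/- Let d ≥ 1, let D ⊆ ℝ^d (Euclidean space) be a nonempty open, bounded, connected set, let T > 0, and let v : ℝ^d → ℝ → ℝ and u₀ : ℝ^d → ℝ. Assume: (i) v is continuous on (closure D) × [0,T]; (ii) for each t ∈ (0,T] the map x ↦ v(x,t) is twice continuously differentiable on D, and for each x ∈ D the map t ↦ v(x,t) is differentiable on (0,T] with ∂v/∂t(x,t) = Δ_x v(x,t), where Δ_x is the Laplacian in the spatial variable; (iii) v(x,t) = 0 for all x in the boundary of D and t ∈ (0,T]; (iv) v(x,0) = u₀(x) for x ∈ closure D, where u₀ is continuous, u₀ ≥ 0 on D, and u₀ is not identically zero on D. Then v(x,t) > 0 for all (x,t) ∈ D × (0,T]. (Lemma 2.2: strict positivity of the solution of the deterministic heat equation with nonnegative, nontrivial initial data, by the strong maximum principle.) -/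

import Mathlib

open Set Metric Filter Topology

/-- The Laplacian of `f : ℝ^d → ℝ`: the sum of the second partial derivatives along the
standard orthonormal basis (equivalently, the trace of the second derivative). -/
noncomputable def laplacian {d : ℕ} (f : EuclideanSpace ℝ (Fin d) → ℝ)
    (x : EuclideanSpace ℝ (Fin d)) : ℝ :=
  ∑ i : Fin d, fderiv ℝ (fun y => fderiv ℝ f y (EuclideanSpace.single i 1)) x
      (EuclideanSpace.single i 1)

/-- If `f` has derivative `c` within `s` at `a`, `f a` is a minimum among points of `s`
to the left of `a`, and such points accumulate at `a`, then `c ≤ 0`. -/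
lemma deriv_nonpos_of_left_min {f : ℝ → ℝ} {s : Set ℝ} {a c : ℝ}
    (hf : HasDerivWithinAt f c s a)
    (hmin : ∀ τ ∈ s, τ < a → f a ≤ f τ)
    (hacc : a ∈ closure (s ∩ Iio a)) : c ≤ 0 := by
  rw [hasDerivWithinAt_iff_tendsto_slope] at hf
  have hne : (𝓝[s ∩ Iio a] a).NeBot := mem_closure_iff_nhdsWithin_neBot.1 hacc
  have hmono : 𝓝[s ∩ Iio a] a ≤ 𝓝[s \ {a}] a :=
    nhdsWithin_mono a (fun τ hτ => ⟨hτ.1, ne_of_lt hτ.2⟩)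
  have h := hf.mono_left hmono
  have hle : ∀ᶠ τ in 𝓝[s ∩ Iio a] a, slope f a τ ≤ 0 := by
    filter_upwards [self_mem_nhdsWithin] with τ hτ
    have h1 : f a ≤ f τ := hmin τ hτ.1 hτ.2
    have h2 : τ - a < 0 := sub_neg.2 hτ.2
    rw [slope_def_field]
    exact div_nonpos_of_nonneg_of_nonpos (by linarith) h2.le
  exact le_of_tendsto h hle

/-- One-dimensional second derivative test at a local minimum. -/
lemma second_deriv_nonneg_of_isLocalMin {g g' : ℝ → ℝ} {Q : ℝ}
    (hg : ∀ᶠ s in 𝓝 (0:ℝ), HasDerivAt g (g' s) s)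
    (hg' : HasDerivAt g' Q 0)
    (hmin : IsLocalMin g 0) : 0 ≤ Q := by
  by_contra hQ
  push_neg at hQ
  have hg'0 : g' 0 = 0 := hmin.hasDerivAt_eq_zero hg.self_of_nhds
  have hslope := hasDerivAt_iff_tendsto_slope.1 hg'
  have hev : ∀ᶠ u in 𝓝[>] (0:ℝ), g' u < 0 := by
    have h0 : 𝓝[>] (0:ℝ) ≤ 𝓝[≠] (0:ℝ) :=
      nhdsWithin_mono _ (fun u hu => ne_of_gt hu)
    have h1 : ∀ᶠ u in 𝓝[>] (0:ℝ), slope g' 0 u < Q/2 :=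
      (hslope.mono_left h0).eventually_lt_const (by linarith)
    filter_upwards [h1, self_mem_nhdsWithin] with u hu1 hu2
    have hu0 : (0:ℝ) < u := hu2
    rw [slope_def_field, hg'0] at hu1
    have := (div_lt_iff₀ hu0).1 (by simpa using hu1)
    nlinarith
  have hev' : ∀ᶠ u in 𝓝 (0:ℝ), u ∈ Ioi (0:ℝ) → g' u < 0 :=
    eventually_nhdsWithin_iff.1 hev
  have hall := (hg.and (hev'.and hmin)).self_of_nhds  -- dummy, will extract radius
  obtain ⟨η, hη, hprop⟩ := Metric.eventually_nhds_iff.1 (hg.and (hev'.and hmin))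
  set b := η/2 with hb
  have hb0 : 0 < b := by positivity
  have hmem : ∀ u ∈ Icc (0:ℝ) b, dist u 0 < η := by
    intro u hu
    rw [Real.dist_eq, sub_zero, abs_of_nonneg hu.1]
    calc u ≤ b := hu.2
    _ < η := by simp [hb]; linarith
  have hcont : ContinuousOn g (Icc 0 b) := by
    intro u hu
    exact ((hprop (hmem u hu)).1.continuousAt).continuousWithinAt
  have hderiv : ∀ u ∈ interior (Icc (0:ℝ) b), deriv g u < 0 := by
    intro u hu
    rw [interior_Icc] at hu
    have h := hprop (hmem u ⟨hu.1.le, hu.2.le⟩)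
    rw [h.1.deriv]
    exact h.2.1 hu.1
  have hanti : StrictAntiOn g (Icc 0 b) :=
    strictAntiOn_of_deriv_neg (convex_Icc 0 b) hcont hderiv
  have h1 : g b < g 0 := hanti ⟨le_rfl, hb0.le⟩ ⟨hb0.le, le_rfl⟩ hb0
  have h2 : g 0 ≤ g b := (hprop (hmem b ⟨hb0.le, le_rfl⟩)).2.2
  linarith

variable {d : ℕ}

lemma differentiableAt_fderiv_apply {f : EuclideanSpace ℝ (Fin d) → ℝ}
    {U : Set (EuclideanSpace ℝ (Fin d))} (hU : IsOpen U) (hf : ContDiffOn ℝ 2 f U)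
    {x : EuclideanSpace ℝ (Fin d)} (hx : x ∈ U) (e : EuclideanSpace ℝ (Fin d)) :
    DifferentiableAt ℝ (fun y => fderiv ℝ f y e) x := by
  have h1 : ContDiffOn ℝ 1 (fun y => fderiv ℝ f y) U :=
    hf.fderiv_of_isOpen hU (by norm_num)
  have h2 : DifferentiableAt ℝ (fun y => fderiv ℝ f y) x :=
    (h1.contDiffAt (hU.mem_nhds hx)).differentiableAt one_ne_zero
  exact (ContinuousLinearMap.apply ℝ ℝ e).differentiableAt.comp x h2

lemma hasDerivAt_line {f : EuclideanSpace ℝ (Fin d) → ℝ}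
    {U : Set (EuclideanSpace ℝ (Fin d))} (hU : IsOpen U) (hf : ContDiffOn ℝ 2 f U)
    {x e : EuclideanSpace ℝ (Fin d)} {s : ℝ} (hs : x + s • e ∈ U) :
    HasDerivAt (fun τ : ℝ => f (x + τ • e)) (fderiv ℝ f (x + s • e) e) s := by
  have hd : HasFDerivAt f (fderiv ℝ f (x + s • e)) (x + s • e) :=
    ((hf.contDiffAt (hU.mem_nhds hs)).differentiableAt (by norm_num)).hasFDerivAt
  have hline : HasDerivAt (fun τ : ℝ => x + τ • e) e s := by
    simpa using ((hasDerivAt_id s).smul_const e).const_add x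
  simpa [Function.comp_def] using hd.comp_hasDerivAt s hline

lemma hasDerivAt_line2 {f : EuclideanSpace ℝ (Fin d) → ℝ}
    {U : Set (EuclideanSpace ℝ (Fin d))} (hU : IsOpen U) (hf : ContDiffOn ℝ 2 f U)
    {x : EuclideanSpace ℝ (Fin d)} (hx : x ∈ U) (e : EuclideanSpace ℝ (Fin d)) :
    HasDerivAt (fun s : ℝ => fderiv ℝ f (x + s • e) e)
      (fderiv ℝ (fun y => fderiv ℝ f y e) x e) 0 := by
  have h2 := (differentiableAt_fderiv_apply hU hf hx e).hasFDerivAt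
  have hx0 : x + (0:ℝ) • e = x := by simp
  rw [← hx0] at h2
  have hline : HasDerivAt (fun τ : ℝ => x + τ • e) e 0 := by
    simpa using ((hasDerivAt_id (0:ℝ)).smul_const e).const_add x
  simpa [hx0, Function.comp_def] using h2.comp_hasDerivAt 0 hline

lemma laplacian_nonneg_of_isLocalMin {f : EuclideanSpace ℝ (Fin d) → ℝ}
    {U : Set (EuclideanSpace ℝ (Fin d))} (hU : IsOpen U) (hf : ContDiffOn ℝ 2 f U)
    {x : EuclideanSpace ℝ (Fin d)} (hx : x ∈ U) (hmin : IsLocalMin f x) :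
    0 ≤ laplacian f x := by
  unfold laplacian
  apply Finset.sum_nonneg
  intro i _
  set e := EuclideanSpace.single i (1:ℝ) with he
  have hc : Continuous (fun s : ℝ => x + s • e) := by continuity
  have ht : Tendsto (fun s : ℝ => x + s • e) (𝓝 0) (𝓝 x) := by
    have := hc.tendsto (0:ℝ)
    simpa using this
  have hUnb : ∀ᶠ s : ℝ in 𝓝 0, x + s • e ∈ U := ht.eventually_mem (hU.mem_nhds hx)
  apply second_deriv_nonneg_of_isLocalMin (g := fun s : ℝ => f (x + s • e))
      (g' := fun s : ℝ => fderiv ℝ f (x + s • e) e)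
  · filter_upwards [hUnb] with s hs
    exact hasDerivAt_line hU hf hs
  · exact hasDerivAt_line2 hU hf hx e
  · have hev : ∀ᶠ s : ℝ in 𝓝 0, f x ≤ f (x + s • e) := ht.eventually hmin
    refine hev.mono fun s hs => ?_
    simpa using hs

lemma laplacian_le_of_isLocalMin_sub {f g : EuclideanSpace ℝ (Fin d) → ℝ}
    {U : Set (EuclideanSpace ℝ (Fin d))} (hU : IsOpen U) (hf : ContDiffOn ℝ 2 f U)
    (hg : ContDiff ℝ 2 g) {x : EuclideanSpace ℝ (Fin d)} (hx : x ∈ U)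
    (hmin : IsLocalMin (fun z => f z - g z) x) :
    laplacian g x ≤ laplacian f x := by
  have hsub : ContDiffOn ℝ 2 (fun z => f z - g z) U := hf.sub hg.contDiffOn
  have h0 : 0 ≤ laplacian (fun z => f z - g z) x :=
    laplacian_nonneg_of_isLocalMin hU hsub hx hmin
  have heq : laplacian (fun z => f z - g z) x = laplacian f x - laplacian g x := by
    unfold laplacian
    rw [← Finset.sum_sub_distrib]
    refine Finset.sum_congr rfl fun i _ => ?_
    set e := EuclideanSpace.single i (1:ℝ) with he
    have hev : (fun y => fderiv ℝ (fun z => f z - g z) y e) =ᶠ[𝓝 x]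
        (fun y => fderiv ℝ f y e - fderiv ℝ g y e) := by
      filter_upwards [hU.mem_nhds hx] with y hy
      have hfd : DifferentiableAt ℝ f y :=
        (hf.contDiffAt (hU.mem_nhds hy)).differentiableAt (by norm_num)
      have hgd : DifferentiableAt ℝ g y := (hg.differentiable (by norm_num)).differentiableAt
      rw [fderiv_fun_sub hfd hgd]
      rfl
    rw [hev.fderiv_eq, fderiv_fun_sub (differentiableAt_fderiv_apply hU hf hx e)
      (differentiableAt_fderiv_apply isOpen_univ hg.contDiffOn (mem_univ x) e)]
    rfl
  linarith

/-- Squared distance to `y₀`, written in coordinates. -/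
noncomputable def rho (y₀ z : EuclideanSpace ℝ (Fin d)) : ℝ := ∑ j, (z j - y₀ j)^2

lemma rho_eq_dist (y₀ z : EuclideanSpace ℝ (Fin d)) : rho y₀ z = dist z y₀ ^ 2 := by
  rw [EuclideanSpace.dist_eq, Real.sq_sqrt (by positivity)]
  refine Finset.sum_congr rfl fun j _ => ?_
  rw [Real.dist_eq, sq_abs]

lemma rho_nonneg (y₀ z : EuclideanSpace ℝ (Fin d)) : 0 ≤ rho y₀ z := by
  rw [rho_eq_dist]; positivity

lemma continuous_rho (y₀ : EuclideanSpace ℝ (Fin d)) : Continuous (rho y₀) := by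
  unfold rho
  exact continuous_finset_sum _ fun j _ =>
    (((EuclideanSpace.proj j).continuous).sub continuous_const).pow 2

lemma contDiff_rho (y₀ : EuclideanSpace ℝ (Fin d)) : ContDiff ℝ 2 (rho y₀) := by
  unfold rho
  exact ContDiff.sum fun j _ => by
    have := (((EuclideanSpace.proj (𝕜 := ℝ) j).contDiff (n := 2)).sub
      (contDiff_const (c := y₀ j))).pow 2
    exact this

/-- The spatial derivative of `rho`. -/
noncomputable def Drho (y₀ z : EuclideanSpace ℝ (Fin d)) :
    EuclideanSpace ℝ (Fin d) →L[ℝ] ℝ :=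
  ∑ j, (2 * (z j - y₀ j)) • (EuclideanSpace.proj j : EuclideanSpace ℝ (Fin d) →L[ℝ] ℝ)

lemma hasFDerivAt_rho (y₀ z : EuclideanSpace ℝ (Fin d)) :
    HasFDerivAt (rho y₀) (Drho y₀ z) z := by
  unfold rho Drho
  apply HasFDerivAt.fun_sum
  intro j _
  have h1 : HasFDerivAt (fun w : EuclideanSpace ℝ (Fin d) => w j - y₀ j)
      (EuclideanSpace.proj j : EuclideanSpace ℝ (Fin d) →L[ℝ] ℝ) z := by
    have := (ContinuousLinearMap.hasFDerivAt
      (EuclideanSpace.proj (𝕜 := ℝ) j) (x := z)).sub_const (y₀ j)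
    simpa [PiLp.proj_apply] using this
  have h2 := (hasDerivAt_pow 2 (z j - y₀ j)).comp_hasFDerivAt z h1
  refine h2.congr_fderiv ?_
  simp [pow_one]

lemma Drho_apply_single (y₀ z : EuclideanSpace ℝ (Fin d)) (i : Fin d) :
    Drho y₀ z (EuclideanSpace.single i 1) = 2 * (z i - y₀ i) := by
  simp [Drho, ContinuousLinearMap.sum_apply, PiLp.proj_apply,
    EuclideanSpace.single_apply]

lemma contDiff_psi (y₀ : EuclideanSpace ℝ (Fin d)) (A b : ℝ) :
    ContDiff ℝ 2 (fun z => A * (b - rho y₀ z)^2) :=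
  contDiff_const.mul ((contDiff_const.sub (contDiff_rho y₀)).pow 2)

lemma hasFDerivAt_psi (y₀ : EuclideanSpace ℝ (Fin d)) (A b : ℝ)
    (z : EuclideanSpace ℝ (Fin d)) :
    HasFDerivAt (fun w => A * (b - rho y₀ w)^2)
      ((A * (2 * (b - rho y₀ z) ^ 1 * -1)) • Drho y₀ z) z := by
  have houter : HasDerivAt (fun u : ℝ => A * (b - u)^2)
      (A * (2 * (b - rho y₀ z) ^ 1 * -1)) (rho y₀ z) :=
    (((hasDerivAt_id (rho y₀ z)).const_sub b).pow 2).const_mul A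
  exact houter.comp_hasFDerivAt z (hasFDerivAt_rho y₀ z)

lemma fderiv_psi_apply (y₀ : EuclideanSpace ℝ (Fin d)) (A b : ℝ)
    (z : EuclideanSpace ℝ (Fin d)) (i : Fin d) :
    fderiv ℝ (fun w => A * (b - rho y₀ w)^2) z (EuclideanSpace.single i 1)
      = -4 * A * (b - rho y₀ z) * (z i - y₀ i) := by
  rw [(hasFDerivAt_psi y₀ A b z).fderiv]
  simp only [ContinuousLinearMap.smul_apply, Drho_apply_single, smul_eq_mul]
  ring

lemma laplacian_psi (y₀ : EuclideanSpace ℝ (Fin d)) (A b : ℝ)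
    (x : EuclideanSpace ℝ (Fin d)) :
    laplacian (fun z => A * (b - rho y₀ z)^2) x
      = A * (8 * rho y₀ x - 4 * d * (b - rho y₀ x)) := by
  unfold laplacian
  have hterm : ∀ i : Fin d,
      fderiv ℝ (fun w => fderiv ℝ (fun z => A * (b - rho y₀ z)^2) w
        (EuclideanSpace.single i 1)) x (EuclideanSpace.single i 1)
      = -4 * A * (b - rho y₀ x) + 8 * A * (x i - y₀ i)^2 := by
    intro i
    have heq : (fun w => fderiv ℝ (fun z => A * (b - rho y₀ z)^2) w
        (EuclideanSpace.single i 1))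
        = fun w => (-4 * A * (b - rho y₀ w)) * (w i - y₀ i) := by
      funext w
      rw [fderiv_psi_apply]
    rw [heq]
    -- product rule
    have hc : HasFDerivAt (fun w => -4 * A * (b - rho y₀ w))
        ((-4 * A) • ((-1 : ℝ) • Drho y₀ x)) x := by
      have h1 : HasFDerivAt (fun w => b - rho y₀ w) ((-1 : ℝ) • Drho y₀ x) x := by
        exact ((hasFDerivAt_rho y₀ x).const_sub b).congr_fderiv (neg_one_smul ℝ _).symm
      exact h1.const_mul (-4 * A)
    have hw : HasFDerivAt (fun w : EuclideanSpace ℝ (Fin d) => w i - y₀ i)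
        (EuclideanSpace.proj (𝕜 := ℝ) i : EuclideanSpace ℝ (Fin d) →L[ℝ] ℝ) x := by
      have := (ContinuousLinearMap.hasFDerivAt
        (EuclideanSpace.proj (𝕜 := ℝ) i) (x := x)).sub_const (y₀ i)
      simpa [PiLp.proj_apply] using this
    rw [(hc.fun_mul hw).fderiv]
    simp [Drho_apply_single, PiLp.proj_apply, EuclideanSpace.single_apply]
    ring
  rw [Finset.sum_congr rfl (fun i _ => hterm i)]
  rw [Finset.sum_add_distrib, Finset.sum_const, ← Finset.mul_sum]
  have hsum : ∑ i : Fin d, (x i - y₀ i)^2 = rho y₀ x := rfl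
  rw [hsum]
  simp [Finset.card_univ]
  ring

lemma mem_ball_of_rho_lt {y z : EuclideanSpace ℝ (Fin d)} {R : ℝ}
    (h : rho y z < R^2) (hR : 0 ≤ R) : z ∈ ball y R := by
  rw [mem_ball]
  nlinarith [rho_eq_dist y z, dist_nonneg (x := z) (y := y)]

lemma rho_lt_of_mem_ball {y z : EuclideanSpace ℝ (Fin d)} {R : ℝ}
    (h : z ∈ ball y R) : rho y z < R^2 := by
  rw [mem_ball] at h
  nlinarith [rho_eq_dist y z, dist_nonneg (x := z) (y := y)]

lemma rho_le_of_mem_closedBall {y z : EuclideanSpace ℝ (Fin d)} {R : ℝ}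
    (h : z ∈ closedBall y R) : rho y z ≤ R^2 := by
  rw [mem_closedBall] at h
  nlinarith [rho_eq_dist y z, dist_nonneg (x := z) (y := y)]

lemma mem_closedBall_of_rho_le {y z : EuclideanSpace ℝ (Fin d)} {R : ℝ}
    (h : rho y z ≤ R^2) (hR : 0 ≤ R) : z ∈ closedBall y R := by
  rw [mem_closedBall]
  nlinarith [rho_eq_dist y z, dist_nonneg (x := z) (y := y)]

set_option maxHeartbeats 2000000 in
lemma barrier {D : Set (EuclideanSpace ℝ (Fin d))} (hD_open : IsOpen D)
    {T : ℝ} {v : EuclideanSpace ℝ (Fin d) → ℝ → ℝ}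
    (hv_cont : ContinuousOn (fun p : EuclideanSpace ℝ (Fin d) × ℝ => v p.1 p.2)
      ((closure D) ×ˢ Icc 0 T))
    (hv_space : ∀ t ∈ Ioc (0:ℝ) T, ContDiffOn ℝ 2 (fun x => v x t) D)
    (hv_heat : ∀ x ∈ D, ∀ t ∈ Ioc (0:ℝ) T,
      HasDerivWithinAt (fun τ => v x τ) (laplacian (fun y => v y t) x) (Ioc 0 T) t)
    (hv_nonneg : ∀ x ∈ closure D, ∀ t ∈ Icc 0 T, 0 ≤ v x t)
    {y : EuclideanSpace ℝ (Fin d)} {r₀ R s σ c : ℝ}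
    (hr₀ : 0 < r₀) (hrR : r₀ ≤ R) (hball : closedBall y R ⊆ D)
    (hs : 0 ≤ s) (hσ : 0 < σ) (hsT : s + σ ≤ T) (hc : 0 < c)
    (hinit : ∀ z ∈ closedBall y r₀, c ≤ v z s) :
    ∀ z ∈ ball y R, 0 < v z (s + σ) := by
  have hR0 : 0 < R := lt_of_lt_of_le hr₀ hrR
  set β : ℝ := (R^2 - r₀^2)/σ with hβdef
  have hβ0 : 0 ≤ β := by
    apply div_nonneg _ hσ.le
    nlinarith
  have hβσ : β * σ = R^2 - r₀^2 := by
    rw [hβdef, div_mul_cancel₀ _ hσ.ne']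
  set c₁ : ℝ := 2*β + 4*d + 8 with hc₁def
  have hc₁0 : 0 < c₁ := by positivity
  set μ : ℝ := c₁^2/(32*r₀^2) with hμdef
  have hμ0 : 0 < μ := by positivity
  have hμr : μ * (32*r₀^2) = c₁^2 := by
    rw [hμdef, div_mul_cancel₀ _ (by positivity)]
  set ε : ℝ := c/r₀^4 with hεdef
  have hε0 : 0 < ε := by positivity
  have hεr : ε * r₀^4 = c := by
    rw [hεdef, div_mul_cancel₀ _ (by positivity)]
  set ψ : EuclideanSpace ℝ (Fin d) → ℝ → ℝ :=
    fun z τ => ε * (Real.exp (-μ*(τ-s)) * (max (r₀^2 + β*(τ-s) - rho y z) 0)^2) with hψdef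
  -- the comparison `ψ ≤ v` on the cylinder
  have key : ∀ z ∈ closedBall y R, ∀ τ ∈ Icc s (s+σ), ψ z τ ≤ v z τ := by
    have key2 : ∀ δ > 0, ∀ z ∈ closedBall y R, ∀ τ ∈ Icc s (s+σ),
        0 ≤ v z τ - ψ z τ + δ*(τ-s) := by
      intro δ hδ
      set w : EuclideanSpace ℝ (Fin d) × ℝ → ℝ :=
        fun p => v p.1 p.2 - ψ p.1 p.2 + δ*(p.2 - s) with hwdef
      have hw_eval : ∀ z τ, w (z, τ) = v z τ - ψ z τ + δ*(τ-s) := fun z τ => rfl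
      set K := closedBall y R ×ˢ Icc s (s+σ) with hKdef
      have hKc : IsCompact K := (isCompact_closedBall y R).prod isCompact_Icc
      have hKne : K.Nonempty :=
        ⟨(y, s), ⟨mem_closedBall_self hR0.le, ⟨le_rfl, by linarith⟩⟩⟩
      have hsub : K ⊆ (closure D) ×ˢ Icc 0 T := by
        rintro ⟨a, b⟩ ⟨ha, hb⟩
        exact ⟨subset_closure (hball ha), ⟨le_trans hs hb.1, le_trans hb.2 hsT⟩⟩
      have hψcont : Continuous fun p : EuclideanSpace ℝ (Fin d) × ℝ => ψ p.1 p.2 := by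
        apply continuous_const.mul
        apply Continuous.mul
        · exact ((continuous_const.mul (continuous_snd.sub continuous_const))).rexp
        · exact (((continuous_const.add (continuous_const.mul
            (continuous_snd.sub continuous_const))).sub
            ((continuous_rho y).comp continuous_fst)).max continuous_const).pow 2
      have hwcont : ContinuousOn w K := by
        apply ContinuousOn.add
        · exact ContinuousOn.sub (hv_cont.mono hsub) hψcont.continuousOn
        · exact (continuous_const.mul (continuous_snd.sub continuous_const)).continuousOn
      obtain ⟨⟨x₀, t₀⟩, hp₀K, hp₀min⟩ := hKc.exists_isMinOn hKne hwcont
      intro z hz τ hτ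
      suffices hwin : 0 ≤ w (x₀, t₀) by
        have h2 := isMinOn_iff.mp hp₀min (z, τ) (Set.mk_mem_prod hz hτ)
        rw [hw_eval] at h2 hwin
        rw [hw_eval] at h2
        linarith [le_trans hwin h2]
      by_contra hneg
      push_neg at hneg
      have hx₀ball : x₀ ∈ closedBall y R := hp₀K.1
      have ht₀I : t₀ ∈ Icc s (s+σ) := hp₀K.2
      have ht₀T : t₀ ≤ T := by
        have := ht₀I.2; linarith
      rw [hw_eval] at hneg
      have hv₀ : 0 ≤ v x₀ t₀ :=
        hv_nonneg _ (subset_closure (hball hx₀ball)) _ ⟨le_trans hs ht₀I.1, ht₀T⟩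
      have hδt₀ : 0 ≤ δ*(t₀ - s) := by
        have := ht₀I.1
        apply mul_nonneg hδ.le
        linarith
      have hψ₀pos : 0 < ψ x₀ t₀ := by
        linarith
      set q₀ : ℝ := r₀^2 + β*(t₀-s) - rho y x₀ with hq₀def
      have hq₀pos : 0 < q₀ := by
        by_contra hq
        push_neg at hq
        simp only [hψdef] at hψ₀pos
        have hq' : r₀^2 + β*(t₀-s) - rho y x₀ ≤ 0 := hq
        simp only [max_eq_right hq'] at hψ₀pos
        simpa using hψ₀pos
      have hρt : rho y x₀ < R^2 := by
        have h1 : β*(t₀-s) ≤ β*σ := by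
          apply mul_le_mul_of_nonneg_left _ hβ0
          have := ht₀I.2; linarith
        have := hβσ
        simp only [hq₀def] at hq₀pos
        nlinarith
      have hx₀mem : x₀ ∈ ball y R := mem_ball_of_rho_lt hρt hR0.le
      have hx₀D : x₀ ∈ D := hball (ball_subset_closedBall hx₀mem)
      have ht₀s : s < t₀ := by
        rcases lt_or_eq_of_le ht₀I.1 with h | h
        · exact h
        · exfalso
          -- at time s the comparison holds
          have hψs : ψ x₀ s ≤ v x₀ s := by
            rcases le_or_gt (rho y x₀) (r₀^2) with hcase | hcase
            · have hzmem : x₀ ∈ closedBall y r₀ := mem_closedBall_of_rho_le hcase hr₀.le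
              have h1 : c ≤ v x₀ s := hinit x₀ hzmem
              have h2 : ψ x₀ s ≤ c := by
                simp only [hψdef]
                rw [show r₀^2 + β*(s-s) - rho y x₀ = r₀^2 - rho y x₀ by ring,
                  show -μ*(s-s) = (0:ℝ) by ring, Real.exp_zero, one_mul]
                have hqs0 : 0 ≤ max (r₀^2 - rho y x₀) 0 := le_max_right _ _
                have hqs : max (r₀^2 - rho y x₀) 0 ≤ r₀^2 := by
                  apply max_le _ (by positivity)
                  nlinarith [rho_nonneg y x₀]
                calc ε * (max (r₀^2 - rho y x₀) 0)^2 ≤ ε * (r₀^2)^2 := by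
                      apply mul_le_mul_of_nonneg_left _ hε0.le
                      exact pow_le_pow_left₀ hqs0 hqs 2
                  _ = c := by rw [← hεr]; ring
              linarith
            · have hqs : r₀^2 + β*(s-s) - rho y x₀ ≤ 0 := by
                simp only [sub_self, mul_zero, add_zero]
                linarith
              have : ψ x₀ s = 0 := by
                simp only [hψdef]
                rw [max_eq_right hqs]
                ring
              have hvs : 0 ≤ v x₀ s :=
                hv_nonneg _ (subset_closure (hball hx₀ball)) _ ⟨hs, by linarith⟩
              linarith
          rw [← h] at hneg
          simp only [sub_self, mul_zero, add_zero] at hneg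
          linarith
      have ht₀Ioc : t₀ ∈ Ioc (0:ℝ) T := ⟨lt_of_le_of_lt hs ht₀s, ht₀T⟩
      set E₀ : ℝ := Real.exp (-μ*(t₀-s)) with hE₀def
      have hE₀pos : 0 < E₀ := Real.exp_pos _
      set ρ₀ : ℝ := rho y x₀ with hρ₀def
      -- time derivative of ψ at (x₀, ·)
      have hlin : HasDerivAt (fun τ : ℝ => -μ*(τ-s)) (-μ*1) t₀ :=
        ((hasDerivAt_id t₀).sub_const s).const_mul (-μ)
      have hexp : HasDerivAt (fun τ : ℝ => Real.exp (-μ*(τ-s)))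
          (Real.exp (-μ*(t₀-s)) * (-μ*1)) t₀ := hlin.exp
      have hq : HasDerivAt (fun τ : ℝ => r₀^2 + β*(τ-s) - rho y x₀) (β*1) t₀ :=
        ((((hasDerivAt_id t₀).sub_const s).const_mul β).const_add (r₀^2)).sub_const (rho y x₀)
      have hf₁ := (hexp.fun_mul (hq.fun_pow 2)).const_mul ε
      have hf₁' : HasDerivAt
          (fun τ : ℝ => ε * (Real.exp (-μ*(τ-s)) * (r₀^2 + β*(τ-s) - rho y x₀)^2))
          (ε * (E₀ * (2*q₀*β - μ*q₀^2))) t₀ := by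
        refine hf₁.congr_deriv ?_
        rw [hE₀def, hq₀def, hρ₀def]
        norm_num only
        ring
      -- ψ agrees with the smooth version near t₀
      have hqcont : Continuous (fun τ : ℝ => r₀^2 + β*(τ-s) - rho y x₀) := by
        fun_prop
      have hqev : ∀ᶠ τ in 𝓝 t₀, 0 < r₀^2 + β*(τ-s) - rho y x₀ :=
        hqcont.continuousAt.eventually_mem (isOpen_Ioi.mem_nhds hq₀pos)
      have hψev : (fun τ => ψ x₀ τ) =ᶠ[𝓝 t₀]
          (fun τ : ℝ => ε * (Real.exp (-μ*(τ-s)) * (r₀^2 + β*(τ-s) - rho y x₀)^2)) := by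
        filter_upwards [hqev] with τ hτq
        simp only [hψdef]
        simp [max_eq_left hτq.le]
      have hψt : HasDerivWithinAt (fun τ => ψ x₀ τ)
          (ε * (E₀ * (2*q₀*β - μ*q₀^2))) (Ioc s (s+σ)) t₀ :=
        (hf₁'.hasDerivWithinAt).congr_of_eventuallyEq
          (hψev.filter_mono nhdsWithin_le_nhds) hψev.self_of_nhds
      have hvt : HasDerivWithinAt (fun τ => v x₀ τ)
          (laplacian (fun z => v z t₀) x₀) (Ioc s (s+σ)) t₀ :=
        (hv_heat x₀ hx₀D t₀ ht₀Ioc).mono (Ioc_subset_Ioc hs (by linarith))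
      have hδd : HasDerivWithinAt (fun τ : ℝ => δ*(τ-s)) (δ*1) (Ioc s (s+σ)) t₀ :=
        (((hasDerivAt_id t₀).sub_const s).const_mul δ).hasDerivWithinAt
      have hwt := (hvt.sub hψt).add hδd
      have hminleft : ∀ τ ∈ Ioc s (s+σ), τ < t₀ →
          (fun τ => v x₀ τ - ψ x₀ τ + δ*(τ-s)) t₀ ≤ (fun τ => v x₀ τ - ψ x₀ τ + δ*(τ-s)) τ := by
        intro τ hτ _
        have := isMinOn_iff.mp hp₀min (x₀, τ) (Set.mk_mem_prod hx₀ball ⟨hτ.1.le, hτ.2⟩)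
        rw [hw_eval, hw_eval] at this
        exact this
      have hacc : t₀ ∈ closure (Ioc s (s+σ) ∩ Iio t₀) := by
        apply closure_mono (show Ioo s t₀ ⊆ Ioc s (s+σ) ∩ Iio t₀ by
          intro τ hτ
          exact ⟨⟨hτ.1, le_trans hτ.2.le ht₀I.2⟩, hτ.2⟩)
        rw [closure_Ioo (ne_of_lt ht₀s)]
        exact ⟨ht₀s.le, le_rfl⟩
      have hslope := deriv_nonpos_of_left_min hwt hminleft hacc
      -- spatial comparison
      set A : ℝ := ε * E₀ with hAdef
      have hA0 : 0 < A := mul_pos hε0 hE₀pos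
      set b : ℝ := r₀^2 + β*(t₀-s) with hbdef
      have hbr : r₀^2 ≤ b := by
        rw [hbdef]
        have : 0 ≤ β*(t₀-s) := mul_nonneg hβ0 (by linarith)
        linarith
      have hq₀b : q₀ = b - ρ₀ := by rw [hq₀def, hbdef, hρ₀def]
      have hqzcont : Continuous (fun z => b - rho y z) :=
        continuous_const.sub (continuous_rho y)
      have hqzev : ∀ᶠ z in 𝓝 x₀, 0 < b - rho y z := by
        apply hqzcont.continuousAt.eventually_mem (isOpen_Ioi.mem_nhds _)
        simp only [mem_Ioi]
        rw [← hq₀b] at *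
        linarith [hq₀pos]
      have hballev : ∀ᶠ z in 𝓝 x₀, z ∈ closedBall y R :=
        eventually_of_mem (isOpen_ball.mem_nhds hx₀mem) (fun z hz => ball_subset_closedBall hz)
      have hψsp : ∀ z, 0 < b - rho y z → ψ z t₀ = A * (b - rho y z)^2 := by
        intro z hzq
        rw [hψdef, hAdef, hE₀def, hbdef]
        rw [hbdef] at hzq
        simp [max_eq_left hzq.le]
        ring
      have hlocmin : IsLocalMin (fun z => v z t₀ - (A * (b - rho y z)^2)) x₀ := by
        have hev : ∀ᶠ z in 𝓝 x₀,
            v x₀ t₀ - (A * (b - rho y x₀)^2) ≤ v z t₀ - (A * (b - rho y z)^2) := by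
          filter_upwards [hqzev, hballev] with z hzq hzball
          have h1 := isMinOn_iff.mp hp₀min (z, t₀) (Set.mk_mem_prod hzball ht₀I)
          rw [hw_eval, hw_eval] at h1
          rw [← hψsp z hzq]
          rw [← hψsp x₀ (by rw [← hq₀b]; exact hq₀pos)]
          linarith
        exact hev
      have hlap := laplacian_le_of_isLocalMin_sub hD_open (hv_space t₀ ht₀Ioc)
        (contDiff_psi y A b) hx₀D hlocmin
      rw [laplacian_psi y A b x₀] at hlap
      rw [← hρ₀def] at hlap
      -- combine everything
      have hρb : ρ₀ = b - q₀ := by rw [hq₀b]; ring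
      have hXpos : 0 ≤ 8*ρ₀ - 4*(d:ℝ)*q₀ - 2*β*q₀ + μ*q₀^2 := by
        have h1 : 8*ρ₀ - 4*(d:ℝ)*q₀ - 2*β*q₀ + μ*q₀^2
            = μ*q₀^2 - c₁*q₀ + 8*b := by rw [hρb, hc₁def]; ring
        rw [h1]
        clear_value β c₁ μ b q₀ ρ₀
        nlinarith only [hμr, hbr, hμ0, sq_nonneg (2*μ*q₀ - c₁), hr₀,
          mul_le_mul_of_nonneg_left hbr hμ0.le]
      have hfinal : 0 < laplacian (fun z => v z t₀) x₀
          - ε * (E₀ * (2*q₀*β - μ*q₀^2)) + δ*1 := by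
        set L := laplacian (fun z => v z t₀) x₀ with hLdef
        have h1 : A * (8*ρ₀ - 4*(d:ℝ)*(b - ρ₀)) ≤ L := hlap
        have hAE : A = ε * E₀ := hAdef
        clear_value A L β c₁ μ b q₀ ρ₀ E₀ ε
        rw [← hq₀b] at h1
        have h2 : 0 ≤ A * (8*ρ₀ - 4*(d:ℝ)*q₀) - ε * (E₀ * (2*q₀*β - μ*q₀^2)) := by
          rw [hAE]
          have h3 := mul_nonneg (mul_pos hε0 hE₀pos).le hXpos
          nlinarith only [h3]
        nlinarith only [h1, h2, hδ]
      linarith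
    intro z hz τ hτ
    have h1 : ∀ δ > 0, -δ*(τ - s) ≤ v z τ - ψ z τ := by
      intro δ hδ
      have := key2 δ hδ z hz τ hτ
      linarith
    by_contra hcon
    push_neg at hcon
    rcases lt_or_eq_of_le hτ.1 with hts | hts
    · have hτs : 0 < τ - s := by linarith
      have hg : 0 < ψ z τ - v z τ := by linarith
      have hδ'0 : 0 < (ψ z τ - v z τ)/(2*(τ - s)) := div_pos hg (by linarith)
      have h2 := h1 _ hδ'0
      have hgen : ∀ X u : ℝ, u ≠ 0 → X/(2*u)*u = X/2 := by
        intro X u hu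
        field_simp
      have h3 := hgen (ψ z τ - v z τ) (τ - s) (ne_of_gt hτs)
      linarith only [h2, h3, hg]
    · -- τ = s : direct estimate
      have h2 := h1 1 one_pos
      rw [← hts] at hcon h2
      linarith only [h2, hcon]
  -- conclusion
  intro z hz
  have h1 := key z (ball_subset_closedBall hz) (s+σ) ⟨by linarith, le_rfl⟩
  have h2 : 0 < ψ z (s+σ) := by
    simp only [hψdef]
    have hq : 0 < r₀^2 + β*(s+σ-s) - rho y z := by
      have h3 : rho y z < R^2 := rho_lt_of_mem_ball hz
      have h4 : β*(s+σ-s) = R^2 - r₀^2 := by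
        rw [show s+σ-s = σ by ring]
        exact hβσ
      linarith
    have : max (r₀^2 + β*(s+σ-s) - rho y z) 0 = r₀^2 + β*(s+σ-s) - rho y z :=
      max_eq_left hq.le
    rw [this]
    positivity
  linarith

set_option maxHeartbeats 1000000 in
lemma weak_min {D : Set (EuclideanSpace ℝ (Fin d))} (hD_open : IsOpen D)
    (hD_bdd : Bornology.IsBounded D) (hD_ne : D.Nonempty)
    {T : ℝ} (hT : 0 < T) {v : EuclideanSpace ℝ (Fin d) → ℝ → ℝ}
    {u₀ : EuclideanSpace ℝ (Fin d) → ℝ}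
    (hv_cont : ContinuousOn (fun p : EuclideanSpace ℝ (Fin d) × ℝ => v p.1 p.2)
      ((closure D) ×ˢ Icc 0 T))
    (hv_space : ∀ t ∈ Ioc (0:ℝ) T, ContDiffOn ℝ 2 (fun x => v x t) D)
    (hv_heat : ∀ x ∈ D, ∀ t ∈ Ioc (0:ℝ) T,
      HasDerivWithinAt (fun τ => v x τ) (laplacian (fun y => v y t) x) (Ioc 0 T) t)
    (hv_bdry : ∀ x ∈ frontier D, ∀ t ∈ Ioc (0:ℝ) T, v x t = 0)
    (hv_init : ∀ x ∈ closure D, v x 0 = u₀ x)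
    (hu₀_cont : Continuous u₀) (hu₀_nonneg : ∀ x ∈ D, 0 ≤ u₀ x) :
    ∀ x ∈ closure D, ∀ t ∈ Icc 0 T, 0 ≤ v x t := by
  have hu₀cl : ∀ x ∈ closure D, 0 ≤ u₀ x := by
    intro x hx
    have hclosed : IsClosed {z : EuclideanSpace ℝ (Fin d) | 0 ≤ u₀ z} :=
      isClosed_le continuous_const hu₀_cont
    exact (closure_minimal (fun z hz => hu₀_nonneg z hz) hclosed) hx
  have key : ∀ ε > 0, ∀ x ∈ closure D, ∀ t ∈ Icc (0:ℝ) T, 0 ≤ v x t + ε*t := by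
    intro ε hε
    set w : EuclideanSpace ℝ (Fin d) × ℝ → ℝ := fun p => v p.1 p.2 + ε*p.2 with hwdef
    have hw_eval : ∀ z τ, w (z,τ) = v z τ + ε*τ := fun _ _ => rfl
    set K := closure D ×ˢ Icc (0:ℝ) T with hKdef
    have hKc : IsCompact K := (hD_bdd.isCompact_closure).prod isCompact_Icc
    have hKne : K.Nonempty :=
      ⟨(hD_ne.choose, 0), ⟨subset_closure hD_ne.choose_spec, ⟨le_rfl, hT.le⟩⟩⟩
    have hwcont : ContinuousOn w K :=
      hv_cont.add (continuous_const.mul continuous_snd).continuousOn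
    obtain ⟨⟨x₀,t₀⟩, hp₀K, hp₀min⟩ := hKc.exists_isMinOn hKne hwcont
    intro x hx t ht
    suffices hwin : 0 ≤ w (x₀,t₀) by
      have h2 := isMinOn_iff.mp hp₀min (x,t) (Set.mk_mem_prod hx ht)
      rw [hw_eval] at h2 hwin
      rw [hw_eval] at h2
      linarith
    by_contra hneg
    push_neg at hneg
    rw [hw_eval] at hneg
    have hx₀cl : x₀ ∈ closure D := hp₀K.1
    have ht₀ : t₀ ∈ Icc (0:ℝ) T := hp₀K.2
    by_cases ht₀0 : t₀ = 0
    · rw [ht₀0] at hneg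
      have h1 := hv_init x₀ hx₀cl
      have h2 := hu₀cl x₀ hx₀cl
      rw [h1] at hneg
      linarith
    · have ht₀pos : 0 < t₀ := lt_of_le_of_ne ht₀.1 (Ne.symm ht₀0)
      have ht₀Ioc : t₀ ∈ Ioc (0:ℝ) T := ⟨ht₀pos, ht₀.2⟩
      by_cases hx₀D : x₀ ∈ D
      · have hlocmin : IsLocalMin (fun z => v z t₀) x₀ := by
          have hev : ∀ᶠ z in 𝓝 x₀, v x₀ t₀ ≤ v z t₀ := by
            filter_upwards [hD_open.mem_nhds hx₀D] with z hz
            have := isMinOn_iff.mp hp₀min (z,t₀)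
              (Set.mk_mem_prod (subset_closure hz) ht₀)
            rw [hw_eval, hw_eval] at this
            linarith
          exact hev
        have hlap : 0 ≤ laplacian (fun z => v z t₀) x₀ :=
          laplacian_nonneg_of_isLocalMin hD_open (hv_space t₀ ht₀Ioc) hx₀D hlocmin
        have hder : HasDerivWithinAt (fun τ => v x₀ τ + ε*τ)
            (laplacian (fun z => v z t₀) x₀ + ε*1) (Ioc 0 T) t₀ :=
          (hv_heat x₀ hx₀D t₀ ht₀Ioc).add (((hasDerivAt_id t₀).const_mul ε).hasDerivWithinAt)
        have hminleft : ∀ τ ∈ Ioc (0:ℝ) T, τ < t₀ →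
            (fun τ => v x₀ τ + ε*τ) t₀ ≤ (fun τ => v x₀ τ + ε*τ) τ := by
          intro τ hτ _
          have := isMinOn_iff.mp hp₀min (x₀,τ)
            (Set.mk_mem_prod hx₀cl ⟨hτ.1.le, hτ.2⟩)
          rw [hw_eval, hw_eval] at this
          exact this
        have hacc : t₀ ∈ closure (Ioc (0:ℝ) T ∩ Iio t₀) := by
          apply closure_mono (show Ioo (0:ℝ) t₀ ⊆ Ioc (0:ℝ) T ∩ Iio t₀ by
            intro τ hτ
            exact ⟨⟨hτ.1, le_trans hτ.2.le ht₀.2⟩, hτ.2⟩)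
          rw [closure_Ioo (ne_of_lt ht₀pos)]
          exact ⟨ht₀pos.le, le_rfl⟩
        have := deriv_nonpos_of_left_min hder hminleft hacc
        linarith
      · have hfr : x₀ ∈ frontier D := by
          rw [hD_open.frontier_eq]
          exact ⟨hx₀cl, hx₀D⟩
        have h0 := hv_bdry x₀ hfr t₀ ht₀Ioc
        rw [h0] at hneg
        nlinarith [mul_nonneg hε.le ht₀.1]
  intro x hx t ht
  by_contra hcon
  push_neg at hcon
  have hgen : ∀ X u : ℝ, 0 < u → 0 < X → X/(2*u)*u = X/2 := by
    intro X u hu _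
    field_simp
  set ε := (-(v x t))/(2*T) with hεdef
  have hε0 : 0 < ε := div_pos (by linarith) (by linarith)
  have h1 := key ε hε0 x hx t ht
  have h2 : ε*t ≤ ε*T := mul_le_mul_of_nonneg_left ht.2 hε0.le
  have h3 : ε*T = (-(v x t))/2 := by
    rw [hεdef]
    exact hgen _ _ hT (by linarith)
  linarith

set_option maxHeartbeats 1000000 in
lemma step_prop {D : Set (EuclideanSpace ℝ (Fin d))} (hD_open : IsOpen D)
    {T : ℝ} {v : EuclideanSpace ℝ (Fin d) → ℝ → ℝ}
    (hv_cont : ContinuousOn (fun p : EuclideanSpace ℝ (Fin d) × ℝ => v p.1 p.2)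
      ((closure D) ×ˢ Icc 0 T))
    (hv_space : ∀ t ∈ Ioc (0:ℝ) T, ContDiffOn ℝ 2 (fun x => v x t) D)
    (hv_heat : ∀ x ∈ D, ∀ t ∈ Ioc (0:ℝ) T,
      HasDerivWithinAt (fun τ => v x τ) (laplacian (fun y => v y t) x) (Ioc 0 T) t)
    (hv_nonneg : ∀ x ∈ closure D, ∀ t ∈ Icc 0 T, 0 ≤ v x t)
    (hDc : Dᶜ.Nonempty)
    {x : EuclideanSpace ℝ (Fin d)} (hx : x ∈ D)
    (hpos : ∀ t ∈ Ioc (0:ℝ) T, 0 < v x t)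
    {z : EuclideanSpace ℝ (Fin d)} (hz : dist z x < infDist x Dᶜ / 2) :
    z ∈ D ∧ ∀ t ∈ Ioc (0:ℝ) T, 0 < v z t := by
  have hid : 0 < infDist x Dᶜ :=
    (hD_open.isClosed_compl.notMem_iff_infDist_pos hDc).1 (by simpa using hx)
  set R := (3/4) * infDist x Dᶜ with hRdef
  have hR0 : 0 < R := by rw [hRdef]; positivity
  have hRD : closedBall x R ⊆ D := by
    intro u hu
    by_contra huD
    have h2 : infDist x Dᶜ ≤ dist x u := infDist_le_dist_of_mem (by simpa using huD)
    rw [mem_closedBall] at hu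
    rw [dist_comm] at h2
    rw [hRdef] at hu
    linarith
  have hzD : z ∈ D := hRD (by rw [mem_closedBall, hRdef]; linarith)
  refine ⟨hzD, ?_⟩
  intro t ht
  have hT0 : 0 < T := lt_of_lt_of_le ht.1 ht.2
  set s := t/2 with hsdef
  have hs0 : 0 < s := by rw [hsdef]; linarith [ht.1]
  have hsT : s < T := by rw [hsdef]; linarith [ht.2, ht.1]
  have hσ : 0 < t - s := by rw [hsdef]; linarith [ht.1]
  have hvx : 0 < v x s := hpos s ⟨hs0, hsT.le⟩
  have hcont_at : ContinuousAt (fun u => v u s) x := by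
    have hopen : IsOpen (D ×ˢ Ioo (0:ℝ) T) := hD_open.prod isOpen_Ioo
    have hmem : (closure D ×ˢ Icc (0:ℝ) T) ∈ 𝓝 (x, s) := by
      apply Filter.mem_of_superset (hopen.mem_nhds (Set.mk_mem_prod hx ⟨hs0, hsT⟩))
      rintro ⟨a, b⟩ ⟨ha, hb⟩
      exact ⟨subset_closure ha, ⟨hb.1.le, hb.2.le⟩⟩
    have hca : ContinuousAt (fun p : EuclideanSpace ℝ (Fin d) × ℝ => v p.1 p.2) (x, s) :=
      hv_cont.continuousAt hmem
    have hg : ContinuousAt (fun u : EuclideanSpace ℝ (Fin d) => (u, s)) x :=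
      (continuous_id.prodMk continuous_const).continuousAt
    exact ContinuousAt.comp (x := x)
      (f := fun u : EuclideanSpace ℝ (Fin d) => (u, s)) hca hg
  have hev : ∀ᶠ u in 𝓝 x, v u s ∈ Ioi (v x s / 2) :=
    hcont_at.eventually_mem (isOpen_Ioi.mem_nhds (by simp; linarith))
  obtain ⟨r₁, hr₁0, hr₁⟩ := Metric.eventually_nhds_iff.1 hev
  set r₀ := min (r₁/2) R with hr₀def
  have hr₀0 : 0 < r₀ := lt_min (by linarith) hR0
  have hr₀R : r₀ ≤ R := min_le_right _ _
  have hinit : ∀ u ∈ closedBall x r₀, v x s / 2 ≤ v u s := by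
    intro u hu
    rw [mem_closedBall] at hu
    have : dist u x < r₁ := by
      have h1 : r₀ ≤ r₁/2 := min_le_left _ _
      linarith
    exact (le_of_lt (hr₁ this))
  have hBall := barrier hD_open hv_cont hv_space hv_heat hv_nonneg hr₀0 hr₀R hRD
    hs0.le hσ (by rw [hsdef]; linarith [ht.2]) (by linarith : (0:ℝ) < v x s / 2) hinit
  have hzball : z ∈ ball x R := by rw [mem_ball, hRdef]; linarith
  have := hBall z hzball
  rwa [show s + (t - s) = t by ring] at this

set_option maxHeartbeats 1000000 in
lemma base_prop {D : Set (EuclideanSpace ℝ (Fin d))} (hD_open : IsOpen D)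
    {T : ℝ} {v : EuclideanSpace ℝ (Fin d) → ℝ → ℝ}
    {u₀ : EuclideanSpace ℝ (Fin d) → ℝ}
    (hv_cont : ContinuousOn (fun p : EuclideanSpace ℝ (Fin d) × ℝ => v p.1 p.2)
      ((closure D) ×ˢ Icc 0 T))
    (hv_space : ∀ t ∈ Ioc (0:ℝ) T, ContDiffOn ℝ 2 (fun x => v x t) D)
    (hv_heat : ∀ x ∈ D, ∀ t ∈ Ioc (0:ℝ) T,
      HasDerivWithinAt (fun τ => v x τ) (laplacian (fun y => v y t) x) (Ioc 0 T) t)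
    (hv_nonneg : ∀ x ∈ closure D, ∀ t ∈ Icc 0 T, 0 ≤ v x t)
    (hv_init : ∀ x ∈ closure D, v x 0 = u₀ x)
    (hu₀_cont : Continuous u₀)
    {x₀ : EuclideanSpace ℝ (Fin d)} (hx₀ : x₀ ∈ D) (hu₀pos : 0 < u₀ x₀) :
    ∀ t ∈ Ioc (0:ℝ) T, 0 < v x₀ t := by
  intro t ht
  have hev : ∀ᶠ u in 𝓝 x₀, u₀ u ∈ Ioi (u₀ x₀ / 2) :=
    hu₀_cont.continuousAt.eventually_mem (isOpen_Ioi.mem_nhds (by simp; linarith))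
  obtain ⟨r₁, hr₁0, hr₁⟩ := Metric.eventually_nhds_iff.1 hev
  obtain ⟨r₂, hr₂0, hr₂D⟩ := Metric.isOpen_iff.1 hD_open x₀ hx₀
  set r₀ := min (r₁/2) (r₂/2) with hr₀def
  have hr₀0 : 0 < r₀ := lt_min (by linarith) (by linarith)
  have hRD : closedBall x₀ r₀ ⊆ D := by
    intro u hu
    apply hr₂D
    rw [mem_closedBall] at hu
    rw [mem_ball]
    have : r₀ ≤ r₂/2 := min_le_right _ _
    linarith
  have hinit : ∀ u ∈ closedBall x₀ r₀, u₀ x₀ / 2 ≤ v u 0 := by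
    intro u hu
    rw [hv_init u (subset_closure (hRD hu))]
    rw [mem_closedBall] at hu
    have h1 : r₀ ≤ r₁/2 := min_le_left _ _
    exact le_of_lt (hr₁ (by linarith))
  have hBall := barrier hD_open hv_cont hv_space hv_heat hv_nonneg hr₀0 le_rfl hRD
    le_rfl ht.1 (by simpa using ht.2) (by linarith : (0:ℝ) < u₀ x₀ / 2) hinit
  have := hBall x₀ (mem_ball_self hr₀0)
  rwa [show 0 + t = t by ring] at this


set_option maxHeartbeats 1000000 in
/-- Lemma 2.2: strict positivity, by the strong maximum principle, of the solution of
the heat equation on a nonempty open bounded connected domain `D ⊆ ℝ^d` over `(0,T]`,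
with homogeneous Dirichlet boundary data and nonnegative, not identically zero,
continuous initial data `u₀`. -/
theorem heat_equation_strict_positivity
    (d : ℕ) (hd : 1 ≤ d) (D : Set (EuclideanSpace ℝ (Fin d)))
    (hD_open : IsOpen D) (hD_bdd : Bornology.IsBounded D) (hD_conn : IsConnected D)
    (T : ℝ) (hT : 0 < T)
    (v : EuclideanSpace ℝ (Fin d) → ℝ → ℝ) (u₀ : EuclideanSpace ℝ (Fin d) → ℝ)
    -- (i) `v` is continuous on `closure D × [0,T]`
    (hv_cont : ContinuousOn (fun p : EuclideanSpace ℝ (Fin d) × ℝ => v p.1 p.2)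
      ((closure D) ×ˢ Icc 0 T))
    -- (ii) for each `t ∈ (0,T]`, `x ↦ v x t` is C² on `D`, and for each `x ∈ D`,
    -- `t ↦ v x t` is differentiable on `(0,T]` with `∂v/∂t = Δₓ v`
    (hv_space : ∀ t ∈ Ioc (0 : ℝ) T, ContDiffOn ℝ 2 (fun x => v x t) D)
    (hv_heat : ∀ x ∈ D, ∀ t ∈ Ioc (0 : ℝ) T,
      HasDerivWithinAt (fun τ => v x τ) (laplacian (fun y => v y t) x) (Ioc 0 T) t)
    -- (iii) homogeneous Dirichlet boundary condition
    (hv_bdry : ∀ x ∈ frontier D, ∀ t ∈ Ioc (0 : ℝ) T, v x t = 0)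
    -- (iv) initial condition with continuous, nonnegative, nontrivial `u₀`
    (hv_init : ∀ x ∈ closure D, v x 0 = u₀ x)
    (hu₀_cont : Continuous u₀)
    (hu₀_nonneg : ∀ x ∈ D, 0 ≤ u₀ x)
    (hu₀_ne : ∃ x ∈ D, u₀ x ≠ 0) :
    ∀ x ∈ D, ∀ t ∈ Ioc (0 : ℝ) T, 0 < v x t := by
  obtain ⟨x₀, hx₀D, hx₀ne⟩ := hu₀_ne
  have hu₀pos : 0 < u₀ x₀ := lt_of_le_of_ne (hu₀_nonneg x₀ hx₀D) (Ne.symm hx₀ne)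
  have hne : Nonempty (Fin d) := Fin.pos_iff_nonempty.1 hd
  have hDc : Dᶜ.Nonempty := by
    rcases Set.eq_empty_or_nonempty Dᶜ with h | h
    · exfalso
      have hDuniv : D = univ := by rwa [compl_empty_iff] at h
      obtain ⟨r, hr⟩ := hD_bdd.subset_closedBall 0
      obtain ⟨i⟩ := hne
      set p := (|r|+1) • EuclideanSpace.single i (1:ℝ) with hpdef
      have hp : p ∈ D := by rw [hDuniv]; exact mem_univ p
      have h2 := hr hp
      rw [mem_closedBall] at h2
      have hnorm : dist p 0 = |r| + 1 := by
        rw [dist_zero_right, hpdef, norm_smul, EuclideanSpace.norm_single]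
        rw [Real.norm_eq_abs, abs_of_nonneg (by positivity)]
        norm_num
      rw [hnorm] at h2
      have := le_abs_self r
      linarith
    · exact h
  have hv_nonneg := weak_min hD_open hD_bdd hD_conn.nonempty hT hv_cont hv_space
    hv_heat hv_bdry hv_init hu₀_cont hu₀_nonneg
  have hbase := base_prop hD_open hv_cont hv_space hv_heat hv_nonneg hv_init
    hu₀_cont hx₀D hu₀pos
  set Step : EuclideanSpace ℝ (Fin d) → EuclideanSpace ℝ (Fin d) → Prop :=
    fun a b => a ∈ D ∧ dist b a < infDist a Dᶜ / 2 with hStepdef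
  have hreach : ∀ z, Relation.ReflTransGen Step x₀ z →
      z ∈ D ∧ ∀ t ∈ Ioc (0:ℝ) T, 0 < v z t := by
    intro z h
    induction h with
    | refl => exact ⟨hx₀D, hbase⟩
    | tail _hab hbc ih =>
        exact step_prop hD_open hv_cont hv_space hv_heat hv_nonneg hDc hbc.1 ih.2 hbc.2
  have hinf_pos : ∀ a ∈ D, 0 < infDist a Dᶜ := fun a ha =>
    (hD_open.isClosed_compl.notMem_iff_infDist_pos hDc).1 (by simpa using ha)
  have hcover : ∀ z ∈ D, Relation.ReflTransGen Step x₀ z := by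
    set U := ⋃ (a : EuclideanSpace ℝ (Fin d))
      (_ : a ∈ D ∧ Relation.ReflTransGen Step x₀ a), ball a (infDist a Dᶜ / 4) with hUdef
    set V := ⋃ (a : EuclideanSpace ℝ (Fin d))
      (_ : a ∈ D ∧ ¬ Relation.ReflTransGen Step x₀ a), ball a (infDist a Dᶜ / 4) with hVdef
    have hUopen : IsOpen U := isOpen_iUnion fun a => isOpen_iUnion fun _ => isOpen_ball
    have hVopen : IsOpen V := isOpen_iUnion fun a => isOpen_iUnion fun _ => isOpen_ball
    have hdisj : Disjoint U V := by
      rw [Set.disjoint_left]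
      intro p hpU hpV
      simp only [hUdef, hVdef, mem_iUnion] at hpU hpV
      obtain ⟨a₁, h₁, hp₁⟩ := hpU
      obtain ⟨a₂, h₂, hp₂⟩ := hpV
      rw [mem_ball] at hp₁ hp₂
      have hi₁ := hinf_pos a₁ h₁.1
      have hi₂ := hinf_pos a₂ h₂.1
      have hrp : Relation.ReflTransGen Step x₀ p :=
        h₁.2.tail ⟨h₁.1, by linarith⟩
      have hpD : p ∈ D := (hreach p hrp).1
      have h5 : infDist a₂ Dᶜ ≤ infDist p Dᶜ + dist a₂ p := infDist_le_infDist_add_dist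
      have h6 : dist a₂ p < infDist p Dᶜ / 2 := by
        rw [dist_comm a₂ p]
        rw [dist_comm a₂ p] at h5
        linarith
      exact h₂.2 (hrp.tail ⟨hpD, h6⟩)
    have hDUV : D ⊆ U ∪ V := by
      intro a ha
      by_cases hrc : Relation.ReflTransGen Step x₀ a
      · exact Or.inl (mem_iUnion.2 ⟨a, mem_iUnion.2 ⟨⟨ha, hrc⟩,
          mem_ball_self (by linarith [hinf_pos a ha])⟩⟩)
      · exact Or.inr (mem_iUnion.2 ⟨a, mem_iUnion.2 ⟨⟨ha, hrc⟩,
          mem_ball_self (by linarith [hinf_pos a ha])⟩⟩)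
    have hDU : (D ∩ U).Nonempty :=
      ⟨x₀, hx₀D, mem_iUnion.2 ⟨x₀, mem_iUnion.2 ⟨⟨hx₀D, Relation.ReflTransGen.refl⟩,
        mem_ball_self (by linarith [hinf_pos x₀ hx₀D])⟩⟩⟩
    have hsubU := (hD_conn.isPreconnected).subset_left_of_subset_union
      hUopen hVopen hdisj hDUV hDU
    intro z hz
    have hzU := hsubU hz
    simp only [hUdef, mem_iUnion] at hzU
    obtain ⟨a, ha, hpz⟩ := hzU
    rw [mem_ball] at hpz
    exact ha.2.tail ⟨ha.1, by linarith [hinf_pos a ha.1]⟩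
  intro x hx t ht
  exact (hreach x (hcover x hx)).2 t ht
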